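/- Let f_1, …, f_N ∈ C(X) be nonnegative continuous functions on a compact Hausdorff space X acting on H, and A_1, …, A_N local operators. Then the norm of the symbol σ(Σ f_j A_j) in A/K(H) is at most (max_{x∈X} Σ_j f_j(x)) · max_j ‖A_j restricted to the subspace of elements supported in supp f_j‖. -/

import Mathlib

open Filter Topology

section Localization

variable {X : Type*} [TopologicalSpace X] [CompactSpace X] [T2Space X]
variable {H : Type*} [NormedAddCommGroup H] [InnerProductSpace ℂ H] [CompleteSpace H]

/-- The complexification of a real-valued continuous function. -/
def toCC {X : Type*} [TopologicalSpace X] (φ : C(X, ℝ)) : C(X, ℂ) :=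
  ⟨fun x => (φ x : ℂ), Complex.continuous_ofReal.comp φ.continuous⟩

/-- The localizing class `F_x` at a point `x`: continuous functions with values in `[0,1]`
equal to `1` in a neighborhood of `x`. -/
def locClass (x : X) : Set C(X, ℝ) :=
  {φ | (∀ y, φ y ∈ Set.Icc (0:ℝ) 1) ∧ ∃ U ∈ 𝓝 x, ∀ y ∈ U, φ y = 1}

variable (π : C(X, ℂ) →⋆ₐ[ℂ] (H →L[ℂ] H))

/-- The C*-algebra `𝒜` of local operators: bounded operators commuting with the
action of every `φ ∈ C(X)` modulo compact operators. -/
def localOps : Set (H →L[ℂ] H) :=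
  {T | ∀ φ : C(X, ℂ), IsCompactOperator ⇑(T ∘L π φ - π φ ∘L T)}

/-- The closed two-sided ideal `J_x` of `𝒜` generated by the functions vanishing at `x`. -/
def Jloc (x : X) : Set (H →L[ℂ] H) :=
  closure {T | ∃ (n : ℕ) (A B : Fin n → H →L[ℂ] H) (φ : Fin n → C(X, ℂ)),
    (∀ i, A i ∈ localOps π) ∧ (∀ i, B i ∈ localOps π) ∧ (∀ i, φ i x = 0) ∧
    T = ∑ i, (A i) ∘L (π (φ i)) ∘L (B i)}

/-- The representation of `C(X)` is faithful and meets the compact operators trivially. -/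
def FaithfulNoCompact : Prop :=
  Function.Injective π ∧ ∀ φ : C(X, ℂ), IsCompactOperator ⇑(π φ) → φ = 0

/-- Each localizing class `F_x`, directed by `φ ≺ ψ ↔ φψ = ψ`, converges strongly to `0`. -/
def LocStrongConv : Prop :=
  ∀ (x : X) (v : H) (ε : ℝ), 0 < ε →
    ∃ φ ∈ locClass x, ∀ ψ ∈ locClass x, φ * ψ = ψ → ‖π (toCC ψ) v‖ < ε

end Localization

section LocalNorms

variable {X : Type*} [TopologicalSpace X] [CompactSpace X] [T2Space X]
variable {H : Type*} [NormedAddCommGroup H] [InnerProductSpace ℂ H] [CompleteSpace H]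
variable (π : C(X, ℂ) →⋆ₐ[ℂ] (H →L[ℂ] H))

/-- The subspace `H_Q ⊆ H` of vectors supported in the closure of `Q ⊆ X`:
those fixed by multiplication by any continuous function equal to `1` on a
neighborhood of the closure of `Q`. -/
def suppSubspace (Q : Set X) : Set H :=
  {v | ∀ φ : C(X, ℝ), (∃ U : Set X, IsOpen U ∧ closure Q ⊆ U ∧ ∀ y ∈ U, φ y = 1) →
    π (toCC φ) v = v}

/-- The local norm `‖B‖_Q`: the norm of the restriction of `B` to the subspace of
vectors supported in the closure of `Q`. -/
noncomputable def normOn (B : H →L[ℂ] H) (Q : Set X) : ℝ :=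
  sSup {r | ∃ v ∈ suppSubspace π Q, ‖v‖ ≤ 1 ∧ r = ‖B v‖}

end LocalNorms

section AuxLemmas
variable {X : Type*} [TopologicalSpace X] [CompactSpace X] [T2Space X]
variable {H : Type*} [NormedAddCommGroup H] [InnerProductSpace ℂ H] [CompleteSpace H]
variable (π : C(X, ℂ) →⋆ₐ[ℂ] (H →L[ℂ] H))

lemma aux_toCC_mul (φ ψ : C(X,ℝ)) : toCC (φ * ψ) = toCC φ * toCC ψ := by
  ext x; simp [toCC]

lemma aux_star_toCC (φ : C(X,ℝ)) : star (toCC φ) = toCC φ := by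
  ext x; simp [toCC, Complex.conj_ofReal]

lemma aux_pi_selfadj (g : C(X,ℝ)) (v w : H) :
    (inner ℂ (π (toCC g) v) w : ℂ) = inner ℂ v (π (toCC g) w) := by
  have h : π (toCC g) = ContinuousLinearMap.adjoint (π (toCC g)) := by
    rw [← ContinuousLinearMap.star_eq_adjoint, ← map_star, aux_star_toCC]
  conv_rhs => rw [h, ContinuousLinearMap.adjoint_inner_right]

lemma aux_mem_supp (g f : C(X,ℝ)) (h : Function.support g ⊆ Function.support f) (v : H) :
    π (toCC g) v ∈ suppSubspace π (Function.support f) := by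
  intro φ ⟨U, hUo, hsub, hone⟩
  have hφg : φ * g = g := by
    ext y
    by_cases hy : g y = 0
    · simp [hy]
    · have : y ∈ U := hsub (subset_closure (h hy))
      simp [hone y this]
  calc π (toCC φ) (π (toCC g) v) = (π (toCC φ) * π (toCC g)) v := rfl
    _ = π (toCC (φ * g)) v := by rw [aux_toCC_mul, map_mul]
    _ = π (toCC g) v := by rw [hφg]

lemma aux_normOn_bddAbove (B : H →L[ℂ] H) (Q : Set X) :
    BddAbove {r | ∃ v ∈ suppSubspace π Q, ‖v‖ ≤ 1 ∧ r = ‖B v‖} := by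
  refine ⟨‖B‖, ?_⟩
  rintro r ⟨v, hv, hle, rfl⟩
  calc ‖B v‖ ≤ ‖B‖ * ‖v‖ := B.le_opNorm v
    _ ≤ ‖B‖ * 1 := by
        have := B.opNorm_nonneg
        gcongr
    _ = ‖B‖ := mul_one _

lemma aux_normOn_nonneg (B : H →L[ℂ] H) (Q : Set X) : 0 ≤ normOn π B Q := by
  apply le_csSup (aux_normOn_bddAbove π B Q)
  refine ⟨0, ?_, by simp, by simp⟩
  intro φ _; simp

lemma aux_norm_le_normOn (B : H →L[ℂ] H) (Q : Set X) {u : H} (hu : u ∈ suppSubspace π Q) :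
    ‖B u‖ ≤ normOn π B Q * ‖u‖ := by
  rcases eq_or_ne u 0 with rfl | hne
  · simp
  · have hupos : (0:ℝ) < ‖u‖ := norm_pos_iff.mpr hne
    set u' : H := (‖u‖⁻¹ : ℝ) • u with hu'
    have hu'mem : u' ∈ suppSubspace π Q := by
      intro φ hφ
      rw [hu', ContinuousLinearMap.map_smul_of_tower, hu φ hφ]
    have hu'norm : ‖u'‖ ≤ 1 := by
      rw [hu', norm_smul, norm_inv, norm_norm, inv_mul_cancel₀ hupos.ne']
    have hmem : ‖B u'‖ ≤ normOn π B Q :=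
      le_csSup (aux_normOn_bddAbove π B Q) ⟨u', hu'mem, hu'norm, rfl⟩
    have : ‖B u'‖ = ‖u‖⁻¹ * ‖B u‖ := by
      rw [hu', ContinuousLinearMap.map_smul_of_tower, norm_smul, norm_inv, norm_norm]
    rw [this] at hmem
    calc ‖B u‖ = ‖u‖ * (‖u‖⁻¹ * ‖B u‖) := by field_simp
      _ ≤ ‖u‖ * normOn π B Q := by gcongr
      _ = normOn π B Q * ‖u‖ := mul_comm _ _

lemma aux_sum_compact {ι : Type*} (s : Finset ι) (F : ι → H →L[ℂ] H)
    (h : ∀ i ∈ s, IsCompactOperator ⇑(F i)) : IsCompactOperator ⇑(∑ i ∈ s, F i) := by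
  classical
  induction s using Finset.induction_on with
  | empty => simpa using isCompactOperator_zero
  | insert a s' hnot ih =>
    rw [Finset.sum_insert hnot]
    have h1 := h a (Finset.mem_insert_self a s')
    have h2 := ih fun i hi => h i (Finset.mem_insert_of_mem hi)
    have h3 := h1.add h2
    have : ⇑(F a + ∑ x ∈ s', F x) = ⇑(F a) + ⇑(∑ x ∈ s', F x) := rfl
    rw [this]
    exact h3

end AuxLemmas

/-- (Local norm estimate, cf. Gohberg–Krupnik.) For nonnegative
`f₁, …, f_N ∈ C(X)` and local operators `A₁, …, A_N`, the norm of the symbol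
`σ(Σ f_j A_j)` in `𝒜/K(H)` (the distance to the compact operators) is at most
`(max_x Σ_j f_j(x)) ⬝ max_j ‖A_j‖_{supp f_j}`. -/
theorem symbol_norm_le_of_partition
    {X : Type*} [TopologicalSpace X] [CompactSpace X] [T2Space X]
    {H : Type*} [NormedAddCommGroup H] [InnerProductSpace ℂ H] [CompleteSpace H]
    (π : C(X, ℂ) →⋆ₐ[ℂ] (H →L[ℂ] H)) (hπ : FaithfulNoCompact π) (hconv : LocStrongConv π)
    (N : ℕ) (f : Fin N → C(X, ℝ)) (hf : ∀ j y, 0 ≤ f j y)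
    (A : Fin N → H →L[ℂ] H) (hA : ∀ j, A j ∈ localOps π) :
    Metric.infDist (∑ j, π (toCC (f j)) ∘L A j)
        {S : H →L[ℂ] H | IsCompactOperator ⇑S} ≤
      (⨆ x : X, ∑ j, f j x) * ⨆ j, normOn π (A j) (Function.support (f j)) := by
  classical
  set M : ℝ := ⨆ x : X, ∑ j, f j x with hM
  set m : ℝ := ⨆ j, normOn π (A j) (Function.support (f j)) with hm
  have hM0 : 0 ≤ M := Real.iSup_nonneg fun x => Finset.sum_nonneg fun j _ => hf j x
  have hm0 : 0 ≤ m := Real.iSup_nonneg fun j => aux_normOn_nonneg π _ _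
  set g : Fin N → C(X, ℝ) := fun j => ⟨fun x => Real.sqrt (f j x),
    Real.continuous_sqrt.comp (f j).continuous⟩ with hgdef
  have hg_mul : ∀ j, g j * g j = f j := fun j => by
    ext x; exact Real.mul_self_sqrt (hf j x)
  have hgg : ∀ j, π (toCC (g j)) ∘L π (toCC (g j)) = π (toCC (f j)) := fun j => by
    rw [← ContinuousLinearMap.mul_def, ← map_mul, ← aux_toCC_mul, hg_mul]
  set S : H →L[ℂ] H := ∑ j, π (toCC (g j)) ∘L (A j ∘L π (toCC (g j))) with hS
  set T : H →L[ℂ] H := ∑ j, π (toCC (f j)) ∘L A j with hT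
  -- T - S is compact
  have hTS : T - S = ∑ j, π (toCC (g j)) ∘L (π (toCC (g j)) ∘L A j - A j ∘L π (toCC (g j))) := by
    rw [hT, hS, ← Finset.sum_sub_distrib]
    refine Finset.sum_congr rfl fun j _ => ?_
    ext u
    simp only [ContinuousLinearMap.sub_apply, ContinuousLinearMap.comp_apply, map_sub]
    congr 1
    rw [← hgg j]
    rfl
  have hcomp : IsCompactOperator ⇑(T - S) := by
    rw [hTS]
    apply aux_sum_compact
    intro j _
    have h1 := hA j (toCC (g j))
    have h2 : ⇑(π (toCC (g j)) ∘L A j - A j ∘L π (toCC (g j))) =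
        -⇑(A j ∘L π (toCC (g j)) - π (toCC (g j)) ∘L A j) := by
      funext x; simp
    have h3 : IsCompactOperator ⇑(π (toCC (g j)) ∘L A j - A j ∘L π (toCC (g j))) := by
      rw [h2]; exact h1.neg
    have h4 := h3.continuous_comp (π (toCC (g j))).continuous
    rw [ContinuousLinearMap.coe_comp']
    exact h4
  have hdist : Metric.infDist T {S' : H →L[ℂ] H | IsCompactOperator ⇑S'} ≤ ‖S‖ := by
    have h5 : Metric.infDist T {S' : H →L[ℂ] H | IsCompactOperator ⇑S'} ≤ dist T (T - S) :=
      Metric.infDist_le_dist_of_mem hcomp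
    simpa [dist_eq_norm, sub_sub_cancel] using h5
  -- norm bound for each A j on the localized subspace
  have hAj : ∀ j (u : H), ‖A j (π (toCC (g j)) u)‖ ≤ m * ‖π (toCC (g j)) u‖ := by
    intro j u
    have hsupp : Function.support (g j) ⊆ Function.support (f j) := by
      intro y hy
      simp only [Function.mem_support] at hy ⊢
      intro h0
      apply hy
      show Real.sqrt (f j y) = 0
      rw [h0, Real.sqrt_zero]
    have hmem := aux_mem_supp π (g j) (f j) hsupp u
    refine le_trans (aux_norm_le_normOn π (A j) _ hmem) ?_
    have hle : normOn π (A j) (Function.support ⇑(f j)) ≤ m := by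
      rw [hm]
      exact le_ciSup (f := fun j => normOn π (A j) (Function.support ⇑(f j)))
        (Set.Finite.bddAbove (Set.finite_range _)) j
    exact mul_le_mul_of_nonneg_right hle (norm_nonneg _)
  -- quadratic bound
  have key : ∀ v : H, ∑ j, ‖π (toCC (g j)) v‖ ^ 2 ≤ M * ‖v‖ ^ 2 := by
    intro v
    have hFcont : Continuous fun x => ∑ j, f j x :=
      continuous_finset_sum _ fun j _ => (f j).continuous
    have hFnorm : ‖toCC (∑ j, f j)‖ ≤ M := by
      rw [ContinuousMap.norm_le _ hM0]
      intro x
      have hx : ‖(toCC (∑ j, f j)) x‖ = |∑ j, f j x| := by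
        show ‖(((∑ j, f j : C(X,ℝ)) x : ℝ) : ℂ)‖ = _
        rw [Complex.norm_real, Real.norm_eq_abs]
        congr 1
        simp
      rw [hx, abs_of_nonneg (Finset.sum_nonneg fun j _ => hf j x)]
      exact le_ciSup (f := fun x => ∑ j, f j x) (isCompact_range hFcont).bddAbove x
    have h1 : ∀ j, (‖π (toCC (g j)) v‖ : ℝ) ^ 2 =
        RCLike.re (inner ℂ v (π (toCC (f j)) v) : ℂ) := by
      intro j
      rw [← inner_self_eq_norm_sq (𝕜 := ℂ)]
      congr 1
      rw [aux_pi_selfadj]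
      congr 1
      rw [← hgg j]
      rfl
    have h2 : toCC (∑ j, f j) = ∑ j, toCC (f j) := by
      ext x; simp [toCC]
    calc ∑ j, ‖π (toCC (g j)) v‖ ^ 2
        = ∑ j, RCLike.re (inner ℂ v (π (toCC (f j)) v) : ℂ) :=
          Finset.sum_congr rfl fun j _ => h1 j
      _ = RCLike.re (inner ℂ v (π (toCC (∑ j, f j)) v) : ℂ) := by
          conv_rhs => rw [h2, map_sum, ContinuousLinearMap.sum_apply, inner_sum, map_sum]
      _ ≤ ‖(inner ℂ v (π (toCC (∑ j, f j)) v) : ℂ)‖ := RCLike.re_le_norm _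
      _ ≤ ‖v‖ * ‖π (toCC (∑ j, f j)) v‖ := norm_inner_le_norm _ _
      _ ≤ ‖v‖ * (M * ‖v‖) := by
          gcongr
          refine le_trans ((π (toCC (∑ j, f j))).le_opNorm v) ?_
          gcongr
          exact le_trans (NonUnitalStarAlgHom.norm_apply_le π _) hFnorm
      _ = M * ‖v‖ ^ 2 := by ring
  -- operator norm bound on S
  have hSnorm : ‖S‖ ≤ M * m := by
    refine ContinuousLinearMap.opNorm_le_bound S (mul_nonneg hM0 hm0) fun v => ?_
    set w : H := S v with hw
    rcases eq_or_ne w 0 with h0 | h0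
    · rw [h0, norm_zero]; positivity
    · have hwpos : 0 < ‖w‖ := norm_pos_iff.mpr h0
      have hCS : ∑ j, ‖π (toCC (g j)) v‖ * ‖π (toCC (g j)) w‖ ≤ M * ‖v‖ * ‖w‖ := by
        have hP0 : 0 ≤ ∑ j, ‖π (toCC (g j)) v‖ * ‖π (toCC (g j)) w‖ :=
          Finset.sum_nonneg fun j _ => mul_nonneg (norm_nonneg _) (norm_nonneg _)
        have hQ0 : 0 ≤ M * ‖v‖ * ‖w‖ := by positivity
        have hsq : (∑ j, ‖π (toCC (g j)) v‖ * ‖π (toCC (g j)) w‖) ^ 2 ≤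
            (M * ‖v‖ * ‖w‖) ^ 2 := by
          calc (∑ j, ‖π (toCC (g j)) v‖ * ‖π (toCC (g j)) w‖) ^ 2
              ≤ (∑ j, ‖π (toCC (g j)) v‖ ^ 2) * ∑ j, ‖π (toCC (g j)) w‖ ^ 2 :=
                Finset.sum_mul_sq_le_sq_mul_sq _ _ _
            _ ≤ (M * ‖v‖ ^ 2) * (M * ‖w‖ ^ 2) := by
                have hv2 := key v
                have hw2 := key w
                have h2 : 0 ≤ ∑ j, ‖π (toCC (g j)) w‖ ^ 2 :=
                  Finset.sum_nonneg fun j _ => sq_nonneg _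
                exact mul_le_mul hv2 hw2 h2 (by positivity)
            _ = (M * ‖v‖ * ‖w‖) ^ 2 := by ring
        exact (pow_le_pow_iff_left₀ hP0 hQ0 two_ne_zero).mp hsq
      have hcalc : ‖w‖ * ‖w‖ ≤ (M * m * ‖v‖) * ‖w‖ := by
        have e1 : (‖w‖ : ℝ) ^ 2 = RCLike.re (inner ℂ w w : ℂ) :=
          (inner_self_eq_norm_sq (𝕜 := ℂ) w).symm
        have e2 : (inner ℂ w w : ℂ) =
            ∑ j, (inner ℂ (A j (π (toCC (g j)) v)) (π (toCC (g j)) w) : ℂ) := by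
          have e3 : (inner ℂ w w : ℂ) =
              ∑ j, (inner ℂ ((π (toCC (g j)) ∘L (A j ∘L π (toCC (g j)))) v) w : ℂ) := by
            rw [← sum_inner, ← ContinuousLinearMap.sum_apply, ← hS, ← hw]
          rw [e3]
          refine Finset.sum_congr rfl fun j _ => ?_
          rw [ContinuousLinearMap.comp_apply, ContinuousLinearMap.comp_apply, aux_pi_selfadj]
        have : ‖w‖ ^ 2 ≤ (M * m * ‖v‖) * ‖w‖ := by
          rw [e1, e2]
          calc RCLike.re (∑ j, (inner ℂ (A j (π (toCC (g j)) v)) (π (toCC (g j)) w) : ℂ))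
              = ∑ j, RCLike.re (inner ℂ (A j (π (toCC (g j)) v)) (π (toCC (g j)) w) : ℂ) :=
                map_sum _ _ _
            _ ≤ ∑ j, ‖(inner ℂ (A j (π (toCC (g j)) v)) (π (toCC (g j)) w) : ℂ)‖ :=
                Finset.sum_le_sum fun j _ => RCLike.re_le_norm _
            _ ≤ ∑ j, (m * ‖π (toCC (g j)) v‖) * ‖π (toCC (g j)) w‖ := by
                refine Finset.sum_le_sum fun j _ => ?_
                refine le_trans (norm_inner_le_norm _ _) ?_
                gcongr
                exact hAj j v
            _ = m * ∑ j, ‖π (toCC (g j)) v‖ * ‖π (toCC (g j)) w‖ := by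
                rw [Finset.mul_sum]
                exact Finset.sum_congr rfl fun j _ => by ring
            _ ≤ m * (M * ‖v‖ * ‖w‖) := by gcongr
            _ = (M * m * ‖v‖) * ‖w‖ := by ring
        calc ‖w‖ * ‖w‖ = ‖w‖ ^ 2 := (sq ‖w‖).symm
          _ ≤ (M * m * ‖v‖) * ‖w‖ := this
      have := le_of_mul_le_mul_right hcalc hwpos
      exact this
  exact le_trans hdist hSnorm
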